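/- arXiv:1603.08186 — 6 statements merged into one kernel-verified Lean document; each statement's English description precedes it below -/
import Mathlib

section
/- In a quasi-pointed finitely complete category, given an internal equivalence relation (R, r₁, r₂) on an object X, if k : K → R is the kernel of r₁, then the composite r₂ ∘ k : K → X is Bourn-normal to R. -/
open CategoryTheory CategoryTheory.Limits

universe v u

/-- `n : N ⟶ X` is a kernel of `f : X ⟶ Y`: it is a pullback of the
initial arrow `0 ⟶ Y` along `f`. -/
def IsKernelOf {C : Type u} [Category.{v} C] [HasInitial C] {N X Y : C}
    (n : N ⟶ X) (f : X ⟶ Y) : Prop :=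
  ∃ ω : N ⟶ ⊥_ C, IsPullback ω n (initial.to Y) f

/-- `n : N ⟶ X` is Bourn-normal to the relation `(R, r1, r2)` on `X`:
`n × n` factors through `⟨r₁,r₂⟩` via `nt`, and both the square comparing `nt` with
`⟨r₁,r₂⟩` over `n × n` and the square comparing `nt` with `r₁` over `n` are pullbacks. -/
def IsBournNormalTo {C : Type u} [Category.{v} C] [HasFiniteLimits C] {N X R : C}
    (n : N ⟶ X) (r1 r2 : R ⟶ X) : Prop :=
  ∃ nt : N ⨯ N ⟶ R,
    IsPullback nt (𝟙 (N ⨯ N)) (prod.lift r1 r2) (prod.map n n) ∧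
    IsPullback nt prod.fst r1 n
/-- An internal equivalence relation on an object `X` of a finitely complete category. -/
structure InternalEqRel (C : Type u) [Category.{v} C] [HasFiniteLimits C] (X : C) where
  R : C
  r1 : R ⟶ X
  r2 : R ⟶ X
  rel_mono : Mono (prod.lift r1 r2)
  rfl' : X ⟶ R
  rfl_r1 : rfl' ≫ r1 = 𝟙 X
  rfl_r2 : rfl' ≫ r2 = 𝟙 X
  symm : R ⟶ R
  symm_r1 : symm ≫ r1 = r2
  symm_r2 : symm ≫ r2 = r1
  htrans : pullback r2 r1 ⟶ R
  htrans_r1 : htrans ≫ r1 = pullback.fst r2 r1 ≫ r1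
  htrans_r2 : htrans ≫ r2 = pullback.snd r2 r1 ≫ r2
/-- In a quasi-pointed finitely complete category, given an internal equivalence relation
`(R, r₁, r₂)` on `X`, if `k` is the kernel of `r₁`, then `r₂ ∘ k` is Bourn-normal
to the relation. -/
theorem normalization_is_bournNormal {C : Type u} [Category.{v} C]
    [HasFiniteLimits C] [HasInitial C]
    (hqp : Mono (initial.to (⊤_ C)))
    {X K : C} (E : InternalEqRel C X) (k : K ⟶ E.R) (hk : IsKernelOf k E.r1) :
    IsBournNormalTo (k ≫ E.r2) E.r1 E.r2 := by
  obtain ⟨ω, hω⟩ := hk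
  haveI := hqp
  haveI := E.rel_mono
  -- the initial object is subterminal
  have bot_ext : ∀ {A : C} (f g : A ⟶ ⊥_ C), f = g := by
    intro A f g
    rw [← cancel_mono (initial.to (⊤_ C))]
    exact Subsingleton.elim _ _
  have kr1 : k ≫ E.r1 = ω ≫ initial.to X := hω.w.symm
  -- any two maps into R via k have equal composite with r1
  have key : ∀ {A : C} (a b : A ⟶ K), a ≫ k ≫ E.r1 = b ≫ k ≫ E.r1 := by
    intro A a b
    rw [kr1, ← Category.assoc, ← Category.assoc, bot_ext (a ≫ ω) (b ≫ ω)]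
  set n : K ⟶ X := k ≫ E.r2 with hn
  have hpbcond : ((prod.fst : K ⨯ K ⟶ K) ≫ k ≫ E.symm) ≫ E.r2 = (prod.snd ≫ k) ≫ E.r1 := by
    have h1 : ((prod.fst : K ⨯ K ⟶ K) ≫ k ≫ E.symm) ≫ E.r2 = prod.fst ≫ k ≫ E.r1 := by
      simp only [Category.assoc, E.symm_r2]
    rw [h1, Category.assoc]
    exact key _ _
  set nt : K ⨯ K ⟶ E.R :=
    pullback.lift (prod.fst ≫ k ≫ E.symm) (prod.snd ≫ k) hpbcond ≫ E.htrans with hnt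
  have nt_r1 : nt ≫ E.r1 = prod.fst ≫ n := by
    rw [hnt, Category.assoc, E.htrans_r1, ← Category.assoc, pullback.lift_fst,
      Category.assoc, Category.assoc, E.symm_r1, hn]
  have nt_r2 : nt ≫ E.r2 = prod.snd ≫ n := by
    rw [hnt, Category.assoc, E.htrans_r2, ← Category.assoc, pullback.lift_snd, hn,
      Category.assoc]
  -- k is mono
  have init_mono : Mono (initial.to X) := by
    have h1 : initial.to X ≫ terminal.from X = initial.to (⊤_ C) := Subsingleton.elim _ _
    have h2 : Mono (initial.to X ≫ terminal.from X) := by rw [h1]; infer_instance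
    exact mono_of_mono _ (terminal.from X)
  have k_mono : Mono k := by
    constructor
    intro A a b hab
    exact hω.hom_ext (by rw [bot_ext (a ≫ ω) (b ≫ ω)]) hab
  refine ⟨nt, ?_, ?_⟩
  · -- first pullback square
    have eq1 : nt ≫ prod.lift E.r1 E.r2 = 𝟙 (K ⨯ K) ≫ prod.map n n := by
      apply Limits.prod.hom_ext <;> simp [nt_r1, nt_r2]
    apply IsPullback.of_isLimit (c := PullbackCone.mk nt (𝟙 (K ⨯ K)) eq1)
    refine PullbackCone.IsLimit.mk eq1 (fun s => s.snd) ?_ (fun s => Category.comp_id _) ?_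
    · intro s
      rw [← cancel_mono (prod.lift E.r1 E.r2)]
      apply Limits.prod.hom_ext
      · simp only [Category.assoc, prod.lift_fst]
        rw [nt_r1]
        have := s.condition =≫ Limits.prod.fst
        simpa [prod.lift_fst] using this.symm
      · simp only [Category.assoc, prod.lift_snd]
        rw [nt_r2]
        have := s.condition =≫ Limits.prod.snd
        simpa [prod.lift_snd] using this.symm
    · intro s m _ h2
      simpa using h2
  · -- second pullback square
    have hcond : ∀ s : PullbackCone E.r1 n, (s.snd ≫ k) ≫ E.r2 = s.fst ≫ E.r1 := fun s => by
      rw [Category.assoc, ← hn, ← s.condition]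
    have tcond : ∀ s : PullbackCone E.r1 n,
        (s.snd ≫ ω) ≫ initial.to X =
          (pullback.lift (s.snd ≫ k) s.fst (hcond s) ≫ E.htrans) ≫ E.r1 := fun s => by
      simp only [Category.assoc]
      rw [E.htrans_r1, pullback.lift_fst_assoc, Category.assoc, kr1]
    have eq2 : nt ≫ E.r1 = prod.fst ≫ n := nt_r1
    apply IsPullback.of_isLimit (c := PullbackCone.mk nt prod.fst eq2)
    refine PullbackCone.IsLimit.mk eq2
      (fun s => prod.lift s.snd (hω.lift (s.snd ≫ ω)
        (pullback.lift (s.snd ≫ k) s.fst (hcond s) ≫ E.htrans) (tcond s))) ?_ ?_ ?_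
    · intro s
      rw [← cancel_mono (prod.lift E.r1 E.r2)]
      apply Limits.prod.hom_ext
      · simp only [Category.assoc, prod.lift_fst]
        rw [nt_r1]
        simp only [prod.lift_fst_assoc]
        exact s.condition.symm
      · simp only [Category.assoc, prod.lift_snd]
        rw [nt_r2]
        simp only [prod.lift_snd_assoc, hn]
        rw [← Category.assoc, IsPullback.lift_snd, Category.assoc, E.htrans_r2,
          ← Category.assoc, pullback.lift_snd]
    · intro s
      simp [prod.lift_fst]
    · intro s m h1 h2
      apply Limits.prod.hom_ext
      · simpa [prod.lift_fst] using h2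
      · rw [prod.lift_snd, ← cancel_mono k, ← cancel_mono (prod.lift E.r1 E.r2)]
        apply Limits.prod.hom_ext
        · simp only [Category.assoc, prod.lift_fst]
          simpa only [Category.assoc] using key (m ≫ prod.snd)
            (hω.lift (s.snd ≫ ω) (pullback.lift (s.snd ≫ k) s.fst (hcond s) ≫ E.htrans)
              (tcond s))
        · simp only [Category.assoc, prod.lift_snd]
          rw [← Category.assoc (hω.lift _ _ _), IsPullback.lift_snd, Category.assoc,
            E.htrans_r2, pullback.lift_snd_assoc]
          have h4 : m ≫ nt ≫ E.r2 = s.fst ≫ E.r2 := by rw [← Category.assoc, h1]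
          rw [nt_r2] at h4
          exact h4
end

section
/- In a quasi-pointed finitely complete category, if n : N → X is Bourn-normal to the kernel pair equivalence relation of a morphism f : X → Y, then ker(f) ≤ n as subobjects of X; more precisely, the composite n ∘ k equals ker(f), where k : K → N is the kernel of the terminal map N → 1. -/
open CategoryTheory CategoryTheory.Limits

universe v u

/-- In a quasi-pointed finitely complete category, if `n : N ⟶ X` is Bourn-normal to the
kernel pair of `f : X ⟶ Y`, and `k : K ⟶ N` is the kernel of the terminal map `N ⟶ 1`,
then the composite `n ∘ k` is a kernel of `f` (so `ker f ≤ n` as subobjects of `X`). -/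
theorem ker_le_of_bournNormal_to_kernelPair {C : Type u} [Category.{v} C]
    [HasFiniteLimits C] [HasInitial C]
    (hqp : Mono (initial.to (⊤_ C)))
    {N X Y K : C} (f : X ⟶ Y) (n : N ⟶ X)
    (hn : IsBournNormalTo n (pullback.fst f f) (pullback.snd f f))
    (k : K ⟶ N) (hk : IsKernelOf k (terminal.from N)) :
    IsKernelOf (k ≫ n) f := by
  obtain ⟨nt, h1, h2⟩ := hn
  obtain ⟨ω, hω⟩ := hk
  haveI := hqp
  set r1 := pullback.fst f f with hr1def
  set r2 := pullback.snd f f with hr2def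
  -- basic equations
  have hnt1 : nt ≫ r1 = prod.fst ≫ n := h2.w
  have hnt2 : nt ≫ r2 = prod.snd ≫ n := by
    have h := congrArg (· ≫ (prod.snd : X ⨯ X ⟶ X)) h1.w
    simp at h
    erw [prod.lift_snd] at h
    exact h
  -- uniqueness of maps into ⊥
  have bot_ext : ∀ {T : C} (a b : T ⟶ ⊥_ C), a = b := by
    intro T a b
    rw [← cancel_mono (initial.to (⊤_ C))]
    apply Subsingleton.elim
  -- n is a monomorphism
  have hmono : Mono n := by
    constructor
    intro T a b hab
    let δ : X ⟶ pullback f f := pullback.lift (𝟙 X) (𝟙 X) (by simp)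
    let p : T ⟶ pullback f f := a ≫ n ≫ δ
    have key : ∀ q : T ⟶ N ⨯ N,
        q ≫ prod.map n n = prod.lift (a ≫ n) (a ≫ n) → q ≫ nt = p := by
      intro q hq
      have w : p ≫ prod.lift r1 r2 = q ≫ prod.map n n := by
        rw [hq]
        apply Limits.prod.hom_ext
        · simp [p, δ, hr1def, hr2def]
          erw [prod.lift_fst, prod.lift_fst, pullback.lift_fst, Category.comp_id]
        · simp [p, δ, hr1def, hr2def]
          erw [prod.lift_snd, prod.lift_snd, pullback.lift_snd, Category.comp_id]
      have hlift := h1.lift_snd p q w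
      simp only [Category.comp_id] at hlift
      have := h1.lift_fst p q w
      rwa [hlift] at this
    have e1 : prod.lift a b ≫ nt = p := by
      apply key
      apply Limits.prod.hom_ext <;> simp [hab]
    have e2 : prod.lift a a ≫ nt = p := by
      apply key
      apply Limits.prod.hom_ext <;> simp
    have : prod.lift a b = prod.lift a a := by
      apply h2.hom_ext
      · rw [e1, e2]
      · erw [prod.lift_fst, prod.lift_fst]
    have := congrArg (· ≫ (prod.snd : N ⨯ N ⟶ N)) this
    erw [prod.lift_snd, prod.lift_snd] at this
    exact this.symm
  -- commutativity of the outer square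
  have hg : (prod.fst : N ⨯ N ⟶ N) ≫ n ≫ f = prod.snd ≫ n ≫ f := by
    rw [← Category.assoc, ← hnt1, ← Category.assoc, ← hnt2,
      Category.assoc, Category.assoc, pullback.condition]
  have comm : ω ≫ initial.to Y = (k ≫ n) ≫ f := by
    have h := congrArg (prod.lift k (ω ≫ initial.to N) ≫ ·) hg
    simp only [← Category.assoc, prod.lift_fst, prod.lift_snd] at h
    have hI : initial.to N ≫ n ≫ f = initial.to Y := Subsingleton.elim _ _
    rw [Category.assoc, Category.assoc, Category.assoc, hI] at h
    rw [Category.assoc]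
    exact h.symm
  have sndfac : ∀ {T : C} (a : T ⟶ pullback f f) (b : T ⟶ N) (w : a ≫ r1 = b ≫ n),
      (h2.lift a b w ≫ prod.snd) ≫ n = a ≫ r2 := by
    intro T a b w
    rw [Category.assoc, ← hnt2, ← Category.assoc, h2.lift_fst]
  have lim : IsLimit (PullbackCone.mk ω (k ≫ n) comm) := ?_
  · exact ⟨ω, IsPullback.of_isLimit lim⟩
  refine PullbackCone.IsLimit.mk comm
    (fun s => hω.lift s.fst ((h2.lift (pullback.lift (s.fst ≫ initial.to X) s.snd ?_)
        (s.fst ≫ initial.to N) ?_) ≫ prod.snd) (Subsingleton.elim _ _)) ?_ ?_ ?_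
  · rw [Category.assoc]
    have hI : initial.to X ≫ f = initial.to Y := Subsingleton.elim _ _
    rw [hI, s.condition]
  · rw [pullback.lift_fst, Category.assoc]
    congr 1
    exact (Subsingleton.elim _ _ : initial.to X = initial.to N ≫ n)
  · intro s
    exact hω.lift_fst _ _ _
  · intro s
    rw [← Category.assoc, hω.lift_snd, sndfac, pullback.lift_snd]
  · intro s m hm1 hm2
    apply hω.hom_ext
    · rw [hω.lift_fst]; exact hm1
    · rw [hω.lift_snd, ← cancel_mono n, sndfac, pullback.lift_snd, Category.assoc]
      exact hm2
end

section
/- In a quasi-pointed finitely complete category, if n : N → X is Bourn-normal to an equivalence relation R on X, then the normalization Nor(R) = r₂ ∘ ker(r₁) of R equals n ∘ k as a subobject of X, where k is the kernel of the terminal map N → 1. -/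
open CategoryTheory CategoryTheory.Limits

universe v u

/-- In a quasi-pointed finitely complete category, if `n : N ⟶ X` is Bourn-normal to an
equivalence relation `E` on `X`, then the normalization `Nor(E) = r₂ ∘ ker r₁` of `E`
equals `n ∘ k` as a subobject of `X`, where `k` is the kernel of `N ⟶ 1`. -/
theorem normalization_eq_comp_kernel {C : Type u} [Category.{v} C]
    [HasFiniteLimits C] [HasInitial C]
    (hqp : Mono (initial.to (⊤_ C)))
    {N X K K' : C} (E : InternalEqRel C X) (n : N ⟶ X)
    (hn : IsBournNormalTo n E.r1 E.r2)
    (k : K ⟶ N) (hk : IsKernelOf k (terminal.from N))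
    (k' : K' ⟶ E.R) (hk' : IsKernelOf k' E.r1) :
    ∃ i : K ≅ K', i.hom ≫ (k' ≫ E.r2) = k ≫ n := by
  obtain ⟨nt, h1, h2⟩ := hn
  obtain ⟨ω, hK⟩ := hk
  obtain ⟨ω', hK'⟩ := hk'
  -- In a quasi-pointed category, homs into the initial object are unique.
  have hbot : ∀ {A : C} (f g : A ⟶ ⊥_ C), f = g := by
    intro A f g
    rw [← cancel_mono (initial.to (⊤_ C))]
    exact Subsingleton.elim _ _
  have hinit : ∀ {A B : C} (f : A ⟶ B), initial.to A ≫ f = initial.to B :=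
    fun f => initial.hom_ext _ _
  -- `nt` composed with the two projections of the relation
  have hnt1 : nt ≫ E.r1 = prod.fst ≫ n := h2.w
  have hnt2 : nt ≫ E.r2 = prod.snd ≫ n := by
    have := h1.w
    calc nt ≫ E.r2 = (nt ≫ prod.lift E.r1 E.r2) ≫ prod.snd := by rw [Category.assoc, prod.lift_snd]
    _ = (𝟙 (N ⨯ N) ≫ prod.map n n) ≫ prod.snd := by rw [this]
    _ = prod.snd ≫ n := by simp
  set m : K ⟶ N ⨯ N := prod.lift (ω ≫ initial.to N) k with hm
  have hu : ω ≫ initial.to X = (m ≫ nt) ≫ E.r1 := by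
    rw [Category.assoc, hnt1, ← Category.assoc, hm]
    rw [prod.lift_fst]
    simp [hinit]
  set u : K ⟶ K' := hK'.lift ω (m ≫ nt) hu with hu_def
  have hl : k' ≫ E.r1 = (ω' ≫ initial.to N) ≫ n := by
    rw [← hK'.w, Category.assoc, hinit]
  set l : K' ⟶ N ⨯ N := h2.lift k' (ω' ≫ initial.to N) hl with hl_def
  set v : K' ⟶ K := hK.lift ω' (l ≫ prod.snd) (Subsingleton.elim _ _) with hv_def
  have hvk : v ≫ k = l ≫ prod.snd := hK.lift_snd _ _ _
  have hvω : v ≫ ω = ω' := hK.lift_fst _ _ _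
  have huk' : u ≫ k' = m ≫ nt := hK'.lift_snd _ _ _
  have huω' : u ≫ ω' = ω := hK'.lift_fst _ _ _
  have hlnt : l ≫ nt = k' := h2.lift_fst _ _ _
  have hlfst : l ≫ prod.fst = ω' ≫ initial.to N := h2.lift_snd _ _ _
  have hvm : v ≫ m = l := by
    apply Limits.prod.hom_ext
    · simp [hm, hlfst, ← Category.assoc, hvω]
      exact prod.lift_fst _ _
    · simp [hm, hvk]
      exact prod.lift_snd _ _
  have hul : u ≫ l = m := by
    apply h2.hom_ext
    · rw [Category.assoc, hlnt, huk']
    · rw [Category.assoc, hlfst, ← Category.assoc, huω', hm]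
      rw [prod.lift_fst]
  refine ⟨⟨u, v, ?_, ?_⟩, ?_⟩
  · apply hK.hom_ext
    · exact hbot _ _
    · rw [Category.assoc, hvk, ← Category.assoc, hul, hm]
      simp
      exact prod.lift_snd _ _
  · apply hK'.hom_ext
    · exact hbot _ _
    · rw [Category.assoc, huk', ← Category.assoc, hvm, hlnt, Category.id_comp]
  · show u ≫ (k' ≫ E.r2) = k ≫ n
    rw [← Category.assoc, huk', Category.assoc, hnt2, ← Category.assoc, hm]
    simp
    rw [← Category.assoc, prod.lift_snd]
end

section
/- In a quasi-pointed finitely complete category, if n : N → X is Bourn-normal to an equivalence relation R and the object N has null support (i.e., there exists a morphism N → 0), then n is isomorphic as a subobject of X to the normalization Nor(R) = r₂ ∘ ker(r₁). -/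
open CategoryTheory CategoryTheory.Limits

universe v u

/-- In a quasi-pointed finitely complete category, if `n : N ⟶ X` is Bourn-normal to an
equivalence relation `E` and `N` has null support (it admits a morphism to `0`), then
`n` is isomorphic, as a subobject of `X`, to the normalization `r₂ ∘ ker r₁` of `E`. -/
theorem bournNormal_nullSupport_iso_normalization {C : Type u} [Category.{v} C]
    [HasFiniteLimits C] [HasInitial C]
    (hqp : Mono (initial.to (⊤_ C)))
    {N X K' : C} (E : InternalEqRel C X) (n : N ⟶ X)
    (hn : IsBournNormalTo n E.r1 E.r2)
    (hns : Nonempty (N ⟶ ⊥_ C))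
    (k' : K' ⟶ E.R) (hk' : IsKernelOf k' E.r1) :
    ∃ i : K' ≅ N, i.hom ≫ n = k' ≫ E.r2 := by
  obtain ⟨nt, h1, h2⟩ := hn
  obtain ⟨ω', hk⟩ := hk'
  obtain ⟨ω⟩ := hns
  -- any two maps into ⊥ are equal (quasi-pointedness)
  have bot_unique : ∀ {T : C} (f g : T ⟶ ⊥_ C), f = g := by
    intro T f g
    have : f ≫ initial.to (⊤_ C) = g ≫ initial.to (⊤_ C) := Subsingleton.elim _ _
    exact (cancel_mono (initial.to (⊤_ C))).mp this
  have nt_r1 : nt ≫ E.r1 = prod.fst ≫ n := h2.w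
  have nt_r2 : nt ≫ E.r2 = prod.snd ≫ n := by
    have := h1.w
    have := congrArg (· ≫ prod.snd) this
    simp only [Category.assoc, Category.id_comp, prod.map_snd] at this
    rw [← this]
    congr 1
    exact (prod.lift_snd _ _).symm
  -- key consequence of the first pullback (with 𝟙 as one leg)
  have key : ∀ {T : C} (c : T ⟶ E.R) (d : T ⟶ N ⨯ N),
      c ≫ prod.lift E.r1 E.r2 = d ≫ prod.map n n → d ≫ nt = c := by
    intro T c d w
    have hl : h1.lift c d w ≫ 𝟙 (N ⨯ N) = d := h1.lift_snd c d w
    have := h1.lift_fst c d w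
    rw [Category.comp_id] at hl
    rw [← hl]; exact this
  set z : N ⟶ N := ω ≫ initial.to N with hz
  set m : N ⟶ E.R := prod.lift z (𝟙 N) ≫ nt with hm
  have hmr1 : m ≫ E.r1 = ω ≫ initial.to X := by
    rw [hm, Category.assoc, nt_r1, ← Category.assoc, prod.lift_fst, hz, Category.assoc,
      initial.to_comp]
  -- u : N ⟶ K'
  have wu : ω ≫ initial.to X = m ≫ E.r1 := hmr1.symm
  set u : N ⟶ K' := hk.lift ω m wu with hu
  have u_k' : u ≫ k' = m := hk.lift_snd ω m wu
  have u_ω' : u ≫ ω' = ω := hk.lift_fst ω m wu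
  -- v : K' ⟶ N ⨯ N
  have wv : k' ≫ E.r1 = (ω' ≫ initial.to N) ≫ n := by
    rw [← hk.w, Category.assoc, initial.to_comp]
  set v : K' ⟶ N ⨯ N := h2.lift k' (ω' ≫ initial.to N) wv with hv
  have v_nt : v ≫ nt = k' := h2.lift_fst k' _ wv
  have v_fst : v ≫ prod.fst = ω' ≫ initial.to N := h2.lift_snd k' _ wv
  set g : K' ⟶ N := v ≫ prod.snd with hg
  have hgn : g ≫ n = k' ≫ E.r2 := by
    rw [hg, Category.assoc, ← nt_r2, ← Category.assoc, v_nt]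
  -- u ≫ v = ⟨z, 𝟙⟩
  have huv : u ≫ v = prod.lift z (𝟙 N) := by
    apply h2.hom_ext
    · rw [Category.assoc, v_nt, u_k', hm]
    · rw [Category.assoc, v_fst, ← Category.assoc, u_ω', prod.lift_fst]
  have hug : u ≫ g = 𝟙 N := by
    rw [hg, ← Category.assoc, huv, prod.lift_snd]
  have hgu : g ≫ u = 𝟙 K' := by
    apply hk.hom_ext
    · rw [Category.assoc, Category.id_comp]
      exact bot_unique _ _
    · rw [Category.assoc, Category.id_comp, u_k', hm]
      have w : k' ≫ prod.lift E.r1 E.r2 = (g ≫ prod.lift z (𝟙 N)) ≫ prod.map n n := by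
        have hgz : g ≫ z = ω' ≫ initial.to N := by
          rw [hz, ← Category.assoc]
          congr 1
          exact bot_unique _ _
        apply Limits.prod.hom_ext
        · simp only [Category.assoc, prod.lift_fst, prod.map_fst]
          rw [← Category.assoc, ← Category.assoc, Category.assoc g, prod.lift_fst, hgz,
            Category.assoc, initial.to_comp, hk.w]
        · simp only [Category.assoc, prod.lift_snd, prod.map_snd, Category.id_comp]
          rw [← Category.assoc, ← Category.assoc, Category.assoc g, prod.lift_snd,
            Category.comp_id, hgn]
      have := key k' (g ≫ prod.lift z (𝟙 N)) w
      rw [Category.assoc] at this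
      rw [this]
  exact ⟨⟨g, u, hgu, hug⟩, hgn⟩
end

section
/- In a quasi-pointed finitely complete category, two morphisms with null-support domain that are both Bourn-normal to the same equivalence relation R are isomorphic as subobjects; i.e., the Bourn-normal monomorphism in N₀(C) associated to a given equivalence relation is essentially unique. -/
open CategoryTheory CategoryTheory.Limits

universe v u

section Aux

variable {C : Type u} [Category.{v} C] [HasFiniteLimits C] [HasInitial C]

/-- In a quasi-pointed category, maps into the initial object are unique. -/
lemma aux_to_initial_unique (hqp : Mono (initial.to (⊤_ C))) {T : C} (a b : T ⟶ ⊥_ C) :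
    a = b := by
  have h : a ≫ initial.to (⊤_ C) = b ≫ initial.to (⊤_ C) := Subsingleton.elim _ _
  exact (cancel_mono (initial.to (⊤_ C))).mp h

/-- A Bourn-normal morphism is mono. -/
lemma aux_bournNormal_mono {N X : C} (E : InternalEqRel C X) (n : N ⟶ X)
    (hn : IsBournNormalTo n E.r1 E.r2) : Mono n := by
  obtain ⟨nt, h1, h2⟩ := hn
  have hr1 : nt ≫ E.r1 = prod.fst ≫ n := h2.w
  have hr2 : nt ≫ E.r2 = prod.snd ≫ n := by
    have := h1.w
    calc nt ≫ E.r2 = (nt ≫ prod.lift E.r1 E.r2) ≫ prod.snd := by rw [Category.assoc, prod.lift_snd]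
    _ = (𝟙 _ ≫ prod.map n n) ≫ prod.snd := by rw [this]
    _ = prod.snd ≫ n := by simp
  constructor
  intro T a b hab
  have key : prod.lift a b = prod.lift a a := by
    apply h2.hom_ext
    · have : Mono (prod.lift E.r1 E.r2) := E.rel_mono
      rw [← cancel_mono (prod.lift E.r1 E.r2)]
      apply Limits.prod.hom_ext
      · simp only [Category.assoc, prod.lift_fst]
        rw [hr1]; rw [prod.lift_fst_assoc, prod.lift_fst_assoc]
      · simp only [Category.assoc, prod.lift_snd]
        rw [hr2]; rw [prod.lift_snd_assoc, prod.lift_snd_assoc]; exact hab.symm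
    · rw [prod.lift_fst, prod.lift_fst]
  have := congrArg (fun f => f ≫ prod.snd) key
  rw [prod.lift_snd, prod.lift_snd] at this; exact this.symm

/-- A Bourn-normal morphism with null-support domain exhibits its domain as the
pullback of `r2` along the initial arrow, via a canonical map `j` with `j ≫ r1 = n`. -/
lemma aux_bournNormal_isPullback (hqp : Mono (initial.to (⊤_ C)))
    {N X : C} (E : InternalEqRel C X) (n : N ⟶ X)
    (hn : IsBournNormalTo n E.r1 E.r2) (ω : N ⟶ ⊥_ C) :
    ∃ j : N ⟶ E.R, j ≫ E.r1 = n ∧ IsPullback j ω E.r2 (initial.to X) := by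
  have hmono : Mono n := aux_bournNormal_mono E n hn
  obtain ⟨nt, h1, h2⟩ := hn
  have hr1 : nt ≫ E.r1 = prod.fst ≫ n := h2.w
  have hr2 : nt ≫ E.r2 = prod.snd ≫ n := by
    have := h1.w
    calc nt ≫ E.r2 = (nt ≫ prod.lift E.r1 E.r2) ≫ prod.snd := by rw [Category.assoc, prod.lift_snd]
    _ = (𝟙 _ ≫ prod.map n n) ≫ prod.snd := by rw [this]
    _ = prod.snd ≫ n := by simp
  set j : N ⟶ E.R := prod.lift (𝟙 N) (ω ≫ initial.to N) ≫ nt with hj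
  have hjr1 : j ≫ E.r1 = n := by
    rw [hj, Category.assoc, hr1, prod.lift_fst_assoc, Category.id_comp]
  have hjr2 : j ≫ E.r2 = ω ≫ initial.to X := by
    rw [hj, Category.assoc, hr2, prod.lift_snd_assoc, Category.assoc, initial.to_comp]
  refine ⟨j, hjr1, ?_⟩
  have comm : j ≫ E.r2 = ω ≫ initial.to X := hjr2
  apply IsPullback.of_isLimit (c := PullbackCone.mk j ω comm)
  apply PullbackCone.IsLimit.mk comm
    (fun s => (h2.lift (s.fst ≫ E.symm) (s.snd ≫ initial.to N)
      (by rw [Category.assoc, E.symm_r1, s.condition, Category.assoc, initial.to_comp])) ≫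
      prod.snd)
  · intro s
    set m := h2.lift (s.fst ≫ E.symm) (s.snd ≫ initial.to N)
      (by rw [Category.assoc, E.symm_r1, s.condition, Category.assoc, initial.to_comp])
    have hmnt : m ≫ nt = s.fst ≫ E.symm := h2.lift_fst _ _ _
    have hmn : (m ≫ prod.snd) ≫ n = s.fst ≫ E.r1 := by
      rw [Category.assoc, ← hr2, reassoc_of% hmnt, E.symm_r2]
    have : Mono (prod.lift E.r1 E.r2) := E.rel_mono
    rw [← cancel_mono (prod.lift E.r1 E.r2)]
    apply Limits.prod.hom_ext
    · simp only [Category.assoc, prod.lift_fst]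
      rw [hjr1]
      simpa [Category.assoc] using hmn
    · simp only [Category.assoc, prod.lift_snd]
      rw [hjr2, s.condition]
      have h0 : m ≫ prod.snd ≫ ω = s.snd := aux_to_initial_unique hqp _ _
      rw [show m ≫ prod.snd ≫ ω ≫ initial.to X = (m ≫ prod.snd ≫ ω) ≫ initial.to X by
        simp, h0]
  · intro s
    exact aux_to_initial_unique hqp _ _
  · intro s t ht _
    set m := h2.lift (s.fst ≫ E.symm) (s.snd ≫ initial.to N)
      (by rw [Category.assoc, E.symm_r1, s.condition, Category.assoc, initial.to_comp])
    rw [← cancel_mono n]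
    have h1' : t ≫ n = s.fst ≫ E.r1 := by rw [← hjr1, reassoc_of% ht]
    have hmnt : m ≫ nt = s.fst ≫ E.symm := h2.lift_fst _ _ _
    have h2' : (m ≫ prod.snd) ≫ n = s.fst ≫ E.r1 := by
      rw [Category.assoc, ← hr2, reassoc_of% hmnt, E.symm_r2]
    rw [h1', h2']

end Aux

/-- In a quasi-pointed finitely complete category, two morphisms with null-support domains
that are both Bourn-normal to the same equivalence relation are isomorphic as subobjects:
the Bourn-normal monomorphism with null-support domain associated to a given equivalence
relation is essentially unique. -/
theorem bournNormal_nullSupport_essentially_unique {C : Type u} [Category.{v} C]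
    [HasFiniteLimits C] [HasInitial C]
    (hqp : Mono (initial.to (⊤_ C)))
    {N N' X : C} (E : InternalEqRel C X) (n : N ⟶ X) (n' : N' ⟶ X)
    (hn : IsBournNormalTo n E.r1 E.r2) (hn' : IsBournNormalTo n' E.r1 E.r2)
    (hns : Nonempty (N ⟶ ⊥_ C)) (hns' : Nonempty (N' ⟶ ⊥_ C)) :
    ∃ i : N ≅ N', i.hom ≫ n' = n := by
  obtain ⟨ω⟩ := hns
  obtain ⟨ω'⟩ := hns'
  obtain ⟨j, hj1, hjP⟩ := aux_bournNormal_isPullback hqp E n hn ω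
  obtain ⟨j', hj1', hjP'⟩ := aux_bournNormal_isPullback hqp E n' hn' ω'
  refine ⟨hjP.isoIsPullback E.R (⊥_ C) hjP', ?_⟩
  have := hjP.isoIsPullback_hom_fst E.R (⊥_ C) hjP'
  rw [← hj1', ← hj1]
  rw [← Category.assoc, this]
end

section
/- Let C be a regular Mal'tsev protomodular category with pushouts of split monomorphisms along arbitrary morphisms. If the monomorphism n : N → X is Bourn-normal to an equivalence relation S, then the canonical comparison monomorphism ρ : Rel(n) → S is an isomorphism; hence the equivalence relation to which n is Bourn-normal is unique up to isomorphism. -/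
open CategoryTheory CategoryTheory.Limits

universe v u

/-- Let `C` be a regular Mal'tsev protomodular category with pushouts of split
monomorphisms along arbitrary morphisms.  If a monomorphism `n : N ⟶ X` is Bourn-normal
to an equivalence relation `S`, then the canonical comparison monomorphism
`ρ : Rel(n) ⟶ S` (over the identity of `X`) is an isomorphism; hence the equivalence
relation to which `n` is Bourn-normal is unique up to isomorphism.  Here
`Rel(n) = R(n_!(∇N)) = (M, m ≫ fst, m ≫ snd)` is constructed from the codiscrete relation
on `N` by pushing out its reflexivity section (the diagonal) along `n` and taking the
regular-epi/mono factorization `⟨d,c⟩ = q ≫ m`. -/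
theorem rel_comparison_isIso_of_protomodular {C : Type u} [Category.{v} C] [HasFiniteLimits C]
    -- `C` is regular:
    (hfactor : ∀ {X Y : C} (f : X ⟶ Y),
      ∃ (Z : C) (q : X ⟶ Z) (i : Z ⟶ Y),
        Nonempty (RegularEpi q) ∧ Mono i ∧ q ≫ i = f)
    (hstab : ∀ {X Y Z : C} (f : X ⟶ Y) (g : Z ⟶ Y),
      Nonempty (RegularEpi f) → Nonempty (RegularEpi (pullback.snd f g)))
    -- `C` is Mal'tsev: every internal reflexive relation is an equivalence relation:
    (hmaltsev : ∀ {X R : C} (r1 r2 : R ⟶ X), Mono (prod.lift r1 r2) →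
      (∃ e : X ⟶ R, e ≫ r1 = 𝟙 X ∧ e ≫ r2 = 𝟙 X) →
      (∃ s : R ⟶ R, s ≫ r1 = r2 ∧ s ≫ r2 = r1) ∧
      (∃ t : pullback r2 r1 ⟶ R,
        t ≫ r1 = pullback.fst r2 r1 ≫ r1 ∧ t ≫ r2 = pullback.snd r2 r1 ≫ r2))
    {N X : C} (n : N ⟶ X) [HasPushout (diag N) n]
    -- the regular image factorization defining `Rel(n)`:
    (M : C) (q : pushout (diag N) n ⟶ M) (m : M ⟶ X ⨯ X)
    (hq : Nonempty (RegularEpi q)) (hm : Mono m)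
    (hfact : q ≫ m =
      prod.lift
        (pushout.desc (prod.fst ≫ n) (𝟙 X) (by rw [← Category.assoc, prod.lift_fst, Category.id_comp, Category.comp_id]))
        (pushout.desc (prod.snd ≫ n) (𝟙 X) (by rw [← Category.assoc, prod.lift_snd, Category.id_comp, Category.comp_id])))
    -- `n` is Bourn-normal to some equivalence relation:
        -- `C` is protomodular: change of base along any morphism for the fibration of
    -- points reflects isomorphisms:
    (hproto : ∀ {A' C' B B' : C} (g : C' ⟶ A') (b : B ⟶ A') (s : A' ⟶ B)
      (b' : B' ⟶ A') (s' : A' ⟶ B') (h : B ⟶ B')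
      (hs : s ≫ b = 𝟙 A') (hs' : s' ≫ b' = 𝟙 A')
      (hb : h ≫ b' = b) (hsh : s ≫ h = s'),
      IsIso (pullback.map g b g b' (𝟙 C') h (𝟙 A')
        (by simp) (by rw [Category.comp_id, hb])) → IsIso h)
 (hmono : Mono n)
    (S : InternalEqRel C X) (hS : IsBournNormalTo n S.r1 S.r2) :
    ∀ ρ : M ⟶ S.R, ρ ≫ S.r1 = m ≫ prod.fst → ρ ≫ S.r2 = m ≫ prod.snd → IsIso ρ := by
  intro ρ hρ1 hρ2
  obtain ⟨nt, hpb1, hpb2⟩ := hS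
  have hlift_eq : ρ ≫ prod.lift S.r1 S.r2 = m := by
    apply Limits.prod.hom_ext <;> simp [hρ1, hρ2, prod.lift_fst, prod.lift_snd, prod.lift_fst_assoc, prod.lift_snd_assoc, pullback.lift_fst, pullback.lift_snd, pullback.lift_fst_assoc, pullback.lift_snd_assoc]
  have hρ_mono : Mono ρ := by
    have : Mono (ρ ≫ prod.lift S.r1 S.r2) := by rw [hlift_eq]; exact hm
    exact mono_of_mono ρ (prod.lift S.r1 S.r2)
  -- the map `inl ≫ q` into M composes with m to give `prod.map n n`
  have hinlq : (pushout.inl (diag N) n ≫ q) ≫ m = prod.map n n := by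
    rw [Category.assoc, hfact]
    apply Limits.prod.hom_ext <;> simp [ prod.lift_fst, prod.lift_snd, prod.lift_fst_assoc, prod.lift_snd_assoc, pullback.lift_fst, pullback.lift_snd, pullback.lift_fst_assoc, pullback.lift_snd_assoc, pushout.inl_desc, pushout.inr_desc, pushout.inl_desc_assoc, pushout.inr_desc_assoc]
  -- reflexivity section of Rel(n)
  have hinr1 : (pushout.inr (diag N) n ≫ q) ≫ (m ≫ prod.fst) = 𝟙 X := by
    rw [Category.assoc, ← Category.assoc q m, hfact]
    simp [ prod.lift_fst, prod.lift_snd, prod.lift_fst_assoc, prod.lift_snd_assoc, pullback.lift_fst, pullback.lift_snd, pullback.lift_fst_assoc, pullback.lift_snd_assoc, pushout.inl_desc, pushout.inr_desc, pushout.inl_desc_assoc, pushout.inr_desc_assoc]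
  have hinr2 : (pushout.inr (diag N) n ≫ q) ≫ (m ≫ prod.snd) = 𝟙 X := by
    rw [Category.assoc, ← Category.assoc q m, hfact]
    simp [ prod.lift_fst, prod.lift_snd, prod.lift_fst_assoc, prod.lift_snd_assoc, pullback.lift_fst, pullback.lift_snd, pullback.lift_fst_assoc, pullback.lift_snd_assoc, pushout.inl_desc, pushout.inr_desc, pushout.inl_desc_assoc, pushout.inr_desc_assoc]
  have hnt_lift : nt ≫ prod.lift S.r1 S.r2 = prod.map n n := by
    simpa using hpb1.w
  have hsh : (pushout.inr (diag N) n ≫ q) ≫ ρ = S.rfl' := by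
    have := S.rel_mono
    rw [← cancel_mono (prod.lift S.r1 S.r2)]
    rw [Category.assoc, hlift_eq]
    apply Limits.prod.hom_ext
    · simp only [Category.assoc] at hinr1 ⊢
      simp [hinr1, S.rfl_r1, prod.lift_fst, prod.lift_snd, prod.lift_fst_assoc, prod.lift_snd_assoc, pullback.lift_fst, pullback.lift_snd, pullback.lift_fst_assoc, pullback.lift_snd_assoc]
    · simp only [Category.assoc] at hinr2 ⊢
      simp [hinr2, S.rfl_r2, prod.lift_fst, prod.lift_snd, prod.lift_fst_assoc, prod.lift_snd_assoc, pullback.lift_fst, pullback.lift_snd, pullback.lift_fst_assoc, pullback.lift_snd_assoc]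
  have hinlρ : (pushout.inl (diag N) n ≫ q) ≫ ρ = nt := by
    have := S.rel_mono
    rw [← cancel_mono (prod.lift S.r1 S.r2), Category.assoc, hlift_eq, hinlq, hnt_lift]
  -- the flipped normality pullback
  have hflip : IsPullback prod.fst nt n S.r1 := hpb2.flip
  -- apply protomodularity
  apply hproto n (m ≫ prod.fst) (pushout.inr (diag N) n ≫ q) S.r1 S.rfl' ρ
    hinr1 S.rfl_r1 hρ1 hsh
  -- the pullback comparison map
  set pmap := pullback.map n (m ≫ prod.fst) n S.r1 (𝟙 N) ρ (𝟙 X)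
    (by simp) (by rw [Category.comp_id, hρ1]) with hpmap
  have hcomm : prod.fst ≫ n = (pushout.inl (diag N) n ≫ q) ≫ (m ≫ prod.fst) := by
    rw [← Category.assoc, hinlq]; simp
  set e : N ⨯ N ⟶ pullback n (m ≫ prod.fst) :=
    pullback.lift prod.fst (pushout.inl (diag N) n ≫ q) hcomm with he_def
  have he : e ≫ pmap = hflip.isoPullback.hom := by
    apply pullback.hom_ext
    · simp [he_def, hpmap, prod.lift_fst, prod.lift_snd, prod.lift_fst_assoc, prod.lift_snd_assoc, pullback.lift_fst, pullback.lift_snd, pullback.lift_fst_assoc, pullback.lift_snd_assoc]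
    · simp [he_def, hpmap, hinlρ, prod.lift_fst, prod.lift_snd, prod.lift_fst_assoc, prod.lift_snd_assoc, pullback.lift_fst, pullback.lift_snd, pullback.lift_fst_assoc, pullback.lift_snd_assoc]
  have hsplit : IsSplitEpi pmap :=
    ⟨⟨⟨hflip.isoPullback.inv ≫ e, by
        rw [Category.assoc, he]; simp⟩⟩⟩
  have hpmono : Mono pmap := by
    constructor
    intro T u v huv
    apply pullback.hom_ext
    · have h1 := congrArg (· ≫ pullback.fst n S.r1) huv
      simpa [hpmap, prod.lift_fst, prod.lift_snd, prod.lift_fst_assoc, prod.lift_snd_assoc, pullback.lift_fst, pullback.lift_snd, pullback.lift_fst_assoc, pullback.lift_snd_assoc] using h1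
    · have h2 := congrArg (· ≫ pullback.snd n S.r1) huv
      simp only [Category.assoc] at h2
      simp only [hpmap, pullback.lift_snd] at h2
      rw [← cancel_mono ρ]
      simpa [hpmap] using h2
  exact isIso_of_mono_of_isSplitEpi pmap
end
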